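/- A polynomial parity check matrix H(X) over F₂[X]/(X^r - 1) satisfies H(X)·H(X)^T = 0 (i.e., the corresponding binary quasi-cyclic code is dual-containing) if and only if for every pair of rows i, j of the exponent matrix, the difference vector c_i - c_j (computed entrywise mod r) is multiplicity even. -/

import Mathlib

open Polynomial

section Aux

variable (r : ℕ) [NeZero r]

private lemma mk_X_pow_mod (n : ℕ) :
    Ideal.Quotient.mk (Ideal.span ({X ^ r - 1} : Set ((ZMod 2)[X]))) (X ^ n)
      = Ideal.Quotient.mk (Ideal.span ({X ^ r - 1} : Set ((ZMod 2)[X]))) (X ^ (n % r)) := by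
  conv_lhs => rw [← Nat.div_add_mod n r]
  rw [pow_add, pow_mul, map_mul, map_pow]
  have h1 : Ideal.Quotient.mk (Ideal.span ({X ^ r - 1} : Set ((ZMod 2)[X]))) (X ^ r) = 1 := by
    rw [← sub_eq_zero, ← map_one (Ideal.Quotient.mk _), ← map_sub,
      Ideal.Quotient.eq_zero_iff_mem]
    exact Ideal.subset_span rfl
  rw [h1, one_pow, one_mul]

private lemma sum_X_pow_eq_zero_iff {L : ℕ} (d : Fin L → ZMod r) :
    (∑ k, (X : (ZMod 2)[X]) ^ (d k).val) = 0 ↔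
    ∀ v : ZMod r, Even ((Finset.univ.filter fun k => d k = v).card) := by
  have coeff_eq : ∀ m : ℕ, (∑ k, (X : (ZMod 2)[X]) ^ (d k).val).coeff m
      = ((Finset.univ.filter fun k => (d k).val = m).card : ZMod 2) := by
    intro m
    rw [Polynomial.finset_sum_coeff]
    simp only [Polynomial.coeff_X_pow]
    simp only [eq_comm (a := m)]
    exact Finset.sum_boole (p := fun k => (d k).val = m) (s := Finset.univ)
  rw [Polynomial.ext_iff]
  constructor
  · intro h v
    have := h v.val
    rw [coeff_eq, Polynomial.coeff_zero, ZMod.natCast_eq_zero_iff] at this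
    rw [even_iff_two_dvd]
    convert this using 2
    · rfl
    apply Finset.filter_congr
    intro k _
    exact ⟨fun h => h ▸ rfl, fun h => ZMod.val_injective r h⟩
  · intro h m
    rw [coeff_eq, Polynomial.coeff_zero, ZMod.natCast_eq_zero_iff]
    by_cases hm : m < r
    · have hv := h ((m : ZMod r))
      rw [even_iff_two_dvd] at hv
      convert hv using 2
      · rfl
      apply Finset.filter_congr
      intro k _
      constructor
      · intro hk
        apply ZMod.val_injective
        rw [hk, ZMod.val_cast_of_lt hm]
      · intro hk
        rw [hk, ZMod.val_cast_of_lt hm]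
    · have : (Finset.univ.filter fun k => (d k).val = m) = ∅ := by
        apply Finset.filter_false_of_mem
        intro k _
        have := ZMod.val_lt (d k)
        omega
      simp [this]


private lemma mk_sum_eq_zero_iff {L : ℕ} (d : Fin L → ZMod r) :
    Ideal.Quotient.mk (Ideal.span ({X ^ r - 1} : Set ((ZMod 2)[X]))) (∑ k, X ^ (d k).val) = 0 ↔
    (∑ k, (X : (ZMod 2)[X]) ^ (d k).val) = 0 := by
  rw [Ideal.Quotient.eq_zero_iff_mem, Ideal.mem_span_singleton]
  constructor
  · intro hdvd
    by_contra hne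
    have hdeg : (∑ k, (X : (ZMod 2)[X]) ^ (d k).val).degree < (X ^ r - 1 : (ZMod 2)[X]).degree := by
      have h1 : (X ^ r - 1 : (ZMod 2)[X]).degree = r := by
        simpa using Polynomial.degree_X_pow_sub_C (Nat.pos_of_ne_zero (NeZero.ne r)) (1 : ZMod 2)
      rw [h1]
      apply lt_of_le_of_lt (Polynomial.degree_sum_le _ _)
      rw [Finset.sup_lt_iff (by exact WithBot.bot_lt_coe r)]
      intro k _
      rw [Polynomial.degree_X_pow]
      exact_mod_cast ZMod.val_lt (d k)
    exact hne (Polynomial.eq_zero_of_dvd_of_degree_lt hdvd hdeg)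
  · intro h; rw [h]; exact dvd_zero _

end Aux

theorem stmt_9 (r J L : ℕ) [NeZero r] (c : Fin J → Fin L → ZMod r) :
    (Matrix.of fun (j : Fin J) (l : Fin L) =>
        Ideal.Quotient.mk (Ideal.span ({Polynomial.X ^ r - 1} : Set (Polynomial (ZMod 2))))
          (Polynomial.X ^ (c j l).val)) *
      (Matrix.of fun (l : Fin L) (j : Fin J) =>
        Ideal.Quotient.mk (Ideal.span ({Polynomial.X ^ r - 1} : Set (Polynomial (ZMod 2))))
          (Polynomial.X ^ ((-(c j l) : ZMod r)).val)) = 0 ↔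
    ∀ i j : Fin J, ∀ v : ZMod r,
      Even ((Finset.univ.filter fun k : Fin L => c i k - c j k = v).card) := by
  rw [← Matrix.ext_iff]
  apply forall_congr'
  intro i
  apply forall_congr'
  intro j
  have hentry : ∀ k : Fin L,
      Ideal.Quotient.mk (Ideal.span ({X ^ r - 1} : Set ((ZMod 2)[X]))) (X ^ (c i k).val) *
        Ideal.Quotient.mk (Ideal.span ({X ^ r - 1} : Set ((ZMod 2)[X]))) (X ^ ((-(c j k)).val)) =
      Ideal.Quotient.mk (Ideal.span ({X ^ r - 1} : Set ((ZMod 2)[X])))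
        (X ^ ((c i k - c j k).val)) := by
    intro k
    rw [← map_mul, ← pow_add, mk_X_pow_mod]
    congr 2
    rw [sub_eq_add_neg, ZMod.val_add]
  rw [Matrix.mul_apply]
  simp only [Matrix.of_apply, Matrix.zero_apply, hentry, ← map_sum]
  rw [mk_sum_eq_zero_iff]
  exact sum_X_pow_eq_zero_iff r _
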